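/- Let N_O be a finite set of voters covered by a size-k committee O, and let 0 ≤ r ≤ k. For any subset N'' ⊆ N_O, there exists O' ⊆ O with |O'| = r such that O' covers at least (r/k)·|N''| voters of N''. -/

import Mathlib

lemma avg_lemma {C : Type*} [DecidableEq C] (w : C → ℕ) :
    ∀ k : ℕ, ∀ O : Finset C, O.card = k → ∀ r ≤ k,
      ∃ S ⊆ O, S.card = r ∧ r * (∑ c ∈ O, w c) ≤ k * ∑ c ∈ S, w c := by
  intro k
  induction k with
  | zero =>
    intro O hO r hr
    interval_cases r
    exact ⟨∅, Finset.empty_subset _, rfl, by simp⟩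
  | succ k ih =>
    intro O hO r hr
    rcases Nat.eq_zero_or_pos r with rfl | hrpos
    · exact ⟨∅, Finset.empty_subset _, rfl, by simp⟩
    obtain ⟨r', rfl⟩ : ∃ r', r = r' + 1 := ⟨r - 1, by omega⟩
    have hr' : r' ≤ k := by omega
    obtain ⟨u, hu⟩ : ∃ u, k = r' + u := ⟨k - r', by omega⟩
    have hOne : O.Nonempty := Finset.card_pos.mp (by omega)
    obtain ⟨m, hm, hmax⟩ := Finset.exists_max_image O w hOne
    have hO' : (O.erase m).card = k := by
      rw [Finset.card_erase_of_mem hm, hO]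
      omega
    obtain ⟨S', hS'sub, hS'card, h1⟩ := ih (O.erase m) hO' r' hr'
    have hmS' : m ∉ S' := fun h => (Finset.notMem_erase m O) (hS'sub h)
    refine ⟨insert m S', Finset.insert_subset hm (hS'sub.trans (Finset.erase_subset _ _)),
      by rw [Finset.card_insert_of_notMem hmS', hS'card], ?_⟩
    have hsumO : ∑ c ∈ O, w c = w m + ∑ c ∈ O.erase m, w c :=
      (Finset.add_sum_erase _ _ hm).symm
    have hsumS : ∑ c ∈ insert m S', w c = w m + ∑ c ∈ S', w c :=
      Finset.sum_insert hmS'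
    have hbound : ∑ c ∈ O.erase m, w c ≤ k * w m := by
      calc ∑ c ∈ O.erase m, w c ≤ ∑ c ∈ O.erase m, w m :=
            Finset.sum_le_sum (fun c hc => hmax c (Finset.mem_of_mem_erase hc))
        _ = k * w m := by rw [Finset.sum_const, hO', smul_eq_mul]
    set T := ∑ c ∈ O.erase m, w c with hT
    set Sw := ∑ c ∈ S', w c with hSw
    rw [hsumO, hsumS]
    rcases Nat.eq_zero_or_pos k with hk0 | hkpos
    · -- k = 0 forces r' = 0, T = 0
      have hT0 : T = 0 := by
        have : O.erase m = ∅ := Finset.card_eq_zero.mp (by omega)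
        simp [hT, this]
      have hr0 : r' = 0 := by omega
      subst hr0; subst hk0
      simp [hT0]
    -- main case: multiply target by k
    have key : k * ((r' + 1) * (w m + T)) ≤ k * ((k + 1) * (w m + Sw)) := by
      subst hu
      nlinarith [Nat.mul_le_mul_left u hbound, Nat.mul_le_mul_left (r' + u + 1) h1]
    exact Nat.le_of_mul_le_mul_left key hkpos


/-- Averaging argument: if `N''` is a subset of the voters covered by a size-`k`
committee `O`, then for any `r ≤ k` there is a size-`r` subset `O' ⊆ O`
covering at least `(r/k)·|N''|` voters of `N''`. -/
theorem stmt16 {V C : Type*} [Fintype V] [DecidableEq V] [DecidableEq C]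
    (A : V → Finset C) (O : Finset C) (k r : ℕ) (hO : O.card = k) (hr : r ≤ k)
    (NO : Finset V) (hNO : ∀ i ∈ NO, ((A i) ∩ O).Nonempty)
    (N'' : Finset V) (hN'' : N'' ⊆ NO) :
    ∃ O' ⊆ O, O'.card = r ∧
      ((r : ℝ) / (k : ℝ)) * (N''.card : ℝ) ≤
        ((N''.filter (fun i => ((A i) ∩ O').Nonempty)).card : ℝ) := by
  classical
  rcases N''.eq_empty_or_nonempty with rfl | hne
  · obtain ⟨O', hsub, hcard⟩ := Finset.exists_subset_card_eq (s := O) (n := r) (hO ▸ hr)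
    exact ⟨O', hsub, hcard, by simp⟩
  -- N'' nonempty, so C is nonempty
  obtain ⟨i0, hi0⟩ := hne
  have hC : Nonempty C := ⟨(hNO i0 (hN'' hi0)).choose⟩
  -- choose a representative approved candidate for each covered voter
  set f : V → C := fun i =>
    if h : ((A i) ∩ O).Nonempty then h.choose else Classical.arbitrary C with hf
  have hfmem : ∀ i ∈ N'', f i ∈ A i ∩ O := by
    intro i hi
    have h := hNO i (hN'' hi)
    simp only [hf, dif_pos h]
    exact h.choose_spec
  set w : C → ℕ := fun c => (N''.filter (fun i => f i = c)).card with hw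
  have htot : ∑ c ∈ O, w c = N''.card := by
    exact (Finset.card_eq_sum_card_fiberwise
      (fun i hi => (Finset.mem_inter.mp (hfmem i hi)).2)).symm
  obtain ⟨S, hSsub, hScard, hkey⟩ := avg_lemma w k O hO r hr
  refine ⟨S, hSsub, hScard, ?_⟩
  rw [htot] at hkey
  -- sum of weights over S is at most the number of voters covered by S
  have hcover : ∑ c ∈ S, w c ≤ (N''.filter (fun i => ((A i) ∩ S).Nonempty)).card := by
    have heq : ∑ c ∈ S, w c
        = (N''.filter (fun i => f i ∈ S)).card := by
      rw [Finset.card_eq_sum_card_fiberwise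
        (f := f) (s := N''.filter (fun i => f i ∈ S)) (t := S) (fun i hi => (Finset.mem_filter.mp hi).2)]
      apply Finset.sum_congr rfl
      intro c hc
      apply congrArg Finset.card
      ext i
      simp only [Finset.mem_filter, and_assoc]
      constructor
      · rintro ⟨hi, hfi⟩
        exact ⟨hi, hfi ▸ hc, hfi⟩
      · rintro ⟨hi, _, hfi⟩
        exact ⟨hi, hfi⟩
    rw [heq]
    apply Finset.card_le_card
    intro i hi
    obtain ⟨hi1, hi2⟩ := Finset.mem_filter.mp hi
    refine Finset.mem_filter.mpr ⟨hi1, ⟨f i, ?_⟩⟩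
    exact Finset.mem_inter.mpr ⟨(Finset.mem_inter.mp (hfmem i hi1)).1, hi2⟩
  rcases Nat.eq_zero_or_pos k with rfl | hkpos
  · simp only [Nat.cast_zero, div_zero, zero_mul]
    positivity
  rw [div_mul_eq_mul_div, div_le_iff₀ (by positivity)]
  have : (r * N''.card : ℕ) ≤ (k * (N''.filter (fun i => ((A i) ∩ S).Nonempty)).card : ℕ) :=
    le_trans hkey (Nat.mul_le_mul_left k hcover)
  calc ((r : ℝ) * N''.card) = ((r * N''.card : ℕ) : ℝ) := by push_cast; ring
    _ ≤ ((k * (N''.filter (fun i => ((A i) ∩ S).Nonempty)).card : ℕ) : ℝ) := by exact_mod_cast this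
    _ = _ := by push_cast; ring
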